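/- Let n ≥ 2 and let c₀,…,c_{2n} be real numbers with c₀ = cₙ = c_{2n} = 0 and c_i ∈ {1,2,3} for every i ∉ {0, n, 2n}. Suppose there exist a, b : {0,…,n} → ℝ whose min-plus convolution equals c. Then there exist such a, b which in addition satisfy a₀ = aₙ = b₀ = bₙ = 0 and, for every i with 0 < i < n: (i) if c_i = 1 then (a_i, b_i) ∈ {(1,1), (1,3), (3,1)} and c_{i+n} = 1, and conversely if c_{i+n} = 1 then c_i = 1 and (a_i, b_i) ∈ {(1,1), (1,3), (3,1)}; (ii) if c_i = c_{i+n} = 2 then (a_i, b_i) = (2,2); (iii) if c_i = 3 or c_{i+n} = 3 then (a_i, b_i) = (3,3). -/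

import Mathlib

/-- Min-plus (tropical) convolution of a sequence `a` supported on `{0,…,m}` with a
sequence `b` supported on `{0,…,k}`: `c j = min_i (a i + b (j - i))`. -/
noncomputable def tropConv (m k : ℕ) (a b : ℕ → ℝ) (j : ℕ) : ℝ :=
  sInf {x : ℝ | ∃ i : ℕ, i ≤ m ∧ i ≤ j ∧ j - i ≤ k ∧ x = a i + b (j - i)}

lemma tropSet_finite (m k : ℕ) (a b : ℕ → ℝ) (j : ℕ) :
    {x : ℝ | ∃ i : ℕ, i ≤ m ∧ i ≤ j ∧ j - i ≤ k ∧ x = a i + b (j - i)}.Finite := by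
  apply Set.Finite.subset ((Set.finite_Iic j).image (fun i => a i + b (j - i)))
  rintro x ⟨i, _, hij, _, rfl⟩
  exact ⟨i, hij, rfl⟩

lemma tropConv_le (m k : ℕ) (a b : ℕ → ℝ) (j i : ℕ)
    (h1 : i ≤ m) (h2 : i ≤ j) (h3 : j - i ≤ k) :
    tropConv m k a b j ≤ a i + b (j - i) :=
  csInf_le (tropSet_finite m k a b j).bddBelow ⟨i, h1, h2, h3, rfl⟩

lemma tropConv_attain (m k : ℕ) (a b : ℕ → ℝ) (j i₀ : ℕ)
    (h1 : i₀ ≤ m) (h2 : i₀ ≤ j) (h3 : j - i₀ ≤ k) :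
    ∃ i, i ≤ m ∧ i ≤ j ∧ j - i ≤ k ∧ tropConv m k a b j = a i + b (j - i) := by
  have hne : {x : ℝ | ∃ i : ℕ, i ≤ m ∧ i ≤ j ∧ j - i ≤ k ∧ x = a i + b (j - i)}.Nonempty :=
    ⟨a i₀ + b (j - i₀), i₀, h1, h2, h3, rfl⟩
  have hmem := Set.Nonempty.csInf_mem hne (tropSet_finite m k a b j)
  exact hmem

lemma le_tropConv (m k : ℕ) (a b : ℕ → ℝ) (j : ℕ) (r : ℝ) (i₀ : ℕ)
    (h1 : i₀ ≤ m) (h2 : i₀ ≤ j) (h3 : j - i₀ ≤ k)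
    (h : ∀ i, i ≤ m → i ≤ j → j - i ≤ k → r ≤ a i + b (j - i)) :
    r ≤ tropConv m k a b j := by
  unfold tropConv
  refine le_csInf ⟨_, i₀, h1, h2, h3, rfl⟩ ?_
  rintro x ⟨i, g1, g2, g3, rfl⟩
  exact h i g1 g2 g3

/-- Lemma 5: for a factorable polynomial of the equal slope, equal degree, concave
type with `c₀ = cₙ = c_{2n} = 0` and all other coefficients in `{1,2,3}`, a
factorization of a normalized special form exists. -/
theorem normalized_factorization (n : ℕ) (hn : 2 ≤ n) (c : ℕ → ℝ)
    (hc0 : c 0 = 0) (hcn : c n = 0) (hc2n : c (2 * n) = 0)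
    (hc : ∀ i ≤ 2 * n, i ≠ 0 → i ≠ n → i ≠ 2 * n →
      c i = 1 ∨ c i = 2 ∨ c i = 3)
    (hfact : ∃ a b : ℕ → ℝ, ∀ j ≤ 2 * n, tropConv n n a b j = c j) :
    ∃ a b : ℕ → ℝ, (∀ j ≤ 2 * n, tropConv n n a b j = c j) ∧
      a 0 = 0 ∧ a n = 0 ∧ b 0 = 0 ∧ b n = 0 ∧
      ∀ i, 0 < i → i < n →
        ((c i = 1 →
            ((a i = 1 ∧ b i = 1) ∨ (a i = 1 ∧ b i = 3) ∨ (a i = 3 ∧ b i = 1)) ∧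
            c (i + n) = 1) ∧
         (c (i + n) = 1 →
            c i = 1 ∧
            ((a i = 1 ∧ b i = 1) ∨ (a i = 1 ∧ b i = 3) ∨ (a i = 3 ∧ b i = 1))) ∧
         (c i = 2 → c (i + n) = 2 → a i = 2 ∧ b i = 2) ∧
         (c i = 3 ∨ c (i + n) = 3 → a i = 3 ∧ b i = 3)) := by
  classical
  -- Step 1: normalize the factorization so that a 0 = b 0 = a n = b n = 0
  have key : ∃ a b : ℕ → ℝ, (∀ j ≤ 2 * n, tropConv n n a b j = c j) ∧
      a 0 = 0 ∧ b 0 = 0 ∧ a n = 0 ∧ b n = 0 := by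
    obtain ⟨a₀, b₀, hab₀⟩ := hfact
    have h00 : a₀ 0 + b₀ 0 = 0 := by
      obtain ⟨i, h1, h2, h3, he⟩ := tropConv_attain n n a₀ b₀ 0 0 (by omega) le_rfl (by omega)
      have hi : i = 0 := by omega
      rw [hi, hab₀ 0 (by omega), hc0] at he
      simpa using he.symm
    have h2n : a₀ n + b₀ n = 0 := by
      obtain ⟨i, h1, h2, h3, he⟩ := tropConv_attain n n a₀ b₀ (2 * n) n le_rfl (by omega) (by omega)
      have hi : i = n := by omega
      rw [hi, hab₀ (2 * n) le_rfl, hc2n] at he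
      have : 2 * n - n = n := by omega
      rw [this] at he
      linarith [he.symm]
    have hn1 : (0 : ℝ) ≤ a₀ n + b₀ 0 := by
      have h := tropConv_le n n a₀ b₀ n n le_rfl le_rfl (by omega)
      rw [hab₀ n (by omega), hcn, Nat.sub_self] at h
      linarith
    have hn2 : (0 : ℝ) ≤ a₀ 0 + b₀ n := by
      have h := tropConv_le n n a₀ b₀ n 0 (by omega) (by omega) (by omega)
      rw [hab₀ n (by omega), hcn, Nat.sub_zero] at h
      linarith
    refine ⟨fun i => a₀ i - a₀ 0, fun i => b₀ i + a₀ 0, ?_, by simp, by simp; linarith,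
      by simp; linarith, by simp; linarith⟩
    intro j hj
    rw [← hab₀ j hj]
    unfold tropConv
    congr 1
    ext x
    constructor
    · rintro ⟨i, g1, g2, g3, rfl⟩; exact ⟨i, g1, g2, g3, by ring⟩
    · rintro ⟨i, g1, g2, g3, rfl⟩; exact ⟨i, g1, g2, g3, by ring⟩
  clear hfact
  obtain ⟨a, b, hab, ha0, hb0, han, hbn⟩ := key
  -- Basic facts about c
  have hc3 : ∀ i, 0 < i → i < 2 * n → i ≠ n → (c i = 1 ∨ c i = 2 ∨ c i = 3) :=
    fun i h1 h2 h3 => hc i (by omega) (by omega) h3 (by omega)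
  have hcge1 : ∀ i, 0 < i → i < 2 * n → i ≠ n → 1 ≤ c i := by
    intro i h1 h2 h3
    rcases hc3 i h1 h2 h3 with h | h | h <;> linarith
  have hcle3 : ∀ i, i ≤ 2 * n → c i ≤ 3 := by
    intro i hi
    by_cases h0 : i = 0
    · rw [h0, hc0]; norm_num
    by_cases hn' : i = n
    · rw [hn', hcn]; norm_num
    by_cases h2 : i = 2 * n
    · rw [h2, hc2n]; norm_num
    rcases hc i hi h0 hn' h2 with h | h | h <;> linarith
  -- coefficient bounds from the factorization
  have hai : ∀ i, i ≤ n → c i ≤ a i := by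
    intro i hi
    have h := tropConv_le n n a b i i hi le_rfl (by omega)
    rw [hab i (by omega), Nat.sub_self, hb0, add_zero] at h
    exact h
  have hbi : ∀ i, i ≤ n → c i ≤ b i := by
    intro i hi
    have h := tropConv_le n n a b i 0 (by omega) (by omega) (by omega)
    rw [hab i (by omega), Nat.sub_zero, ha0, zero_add] at h
    exact h
  have hani : ∀ i, i ≤ n → c (i + n) ≤ a i := by
    intro i hi
    have h := tropConv_le n n a b (i + n) i hi (by omega) (by omega)
    have hsub : i + n - i = n := by omega
    rw [hab (i + n) (by omega), hsub, hbn, add_zero] at h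
    exact h
  have hbni : ∀ i, i ≤ n → c (i + n) ≤ b i := by
    intro i hi
    have h := tropConv_le n n a b (i + n) n le_rfl (by omega) (by omega)
    have hsub : i + n - n = i := by omega
    rw [hab (i + n) (by omega), hsub, han, zero_add] at h
    exact h
  -- if c i = 1 (0<i<n) then a i = 1 or b i = 1
  have hone : ∀ i, 0 < i → i < n → c i = 1 → a i = 1 ∨ b i = 1 := by
    intro i h1 h2 h3
    obtain ⟨k, hk1, hk2, hk3, he⟩ := tropConv_attain n n a b i 0 (by omega) (by omega) (by omega)
    rw [hab i (by omega), h3] at he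
    by_cases hk0 : k = 0
    · right
      rw [hk0, ha0, zero_add, Nat.sub_zero] at he
      exact he.symm
    by_cases hki : k = i
    · left
      rw [hki, Nat.sub_self, hb0, add_zero] at he
      exact he.symm
    · exfalso
      have h5 : (1:ℝ) ≤ a k :=
        le_trans (hcge1 k (by omega) (by omega) (by omega)) (hai k (by omega))
      have h6 : (1:ℝ) ≤ b (i - k) :=
        le_trans (hcge1 (i - k) (by omega) (by omega) (by omega)) (hbi (i - k) (by omega))
      linarith
  -- if c (i+n) = 1 (0<i<n) then a i = 1 or b i = 1
  have hone' : ∀ i, 0 < i → i < n → c (i + n) = 1 → a i = 1 ∨ b i = 1 := by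
    intro i h1 h2 h3
    obtain ⟨k, hk1, hk2, hk3, he⟩ := tropConv_attain n n a b (i + n) i (by omega) (by omega) (by omega)
    rw [hab (i + n) (by omega), h3] at he
    by_cases hki : k = i
    · left
      have hsub : i + n - i = n := by omega
      rw [hki, hsub, hbn, add_zero] at he
      exact he.symm
    by_cases hkn : k = n
    · right
      have hsub : i + n - n = i := by omega
      rw [hkn, hsub, han, zero_add] at he
      exact he.symm
    · exfalso
      have hik : i < k := by omega
      have h5 : (1:ℝ) ≤ a k :=
        le_trans (hcge1 k (by omega) (by omega) (by omega)) (hai k (by omega))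
      have h6 : (1:ℝ) ≤ b (i + n - k) :=
        le_trans (hcge1 (i + n - k) (by omega) (by omega) (by omega)) (hbi (i + n - k) (by omega))
      linarith
  -- c i = 1 iff c (i+n) = 1
  have hiff : ∀ i, 0 < i → i < n → (c i = 1 ↔ c (i + n) = 1) := by
    intro i h1 h2
    constructor
    · intro h3
      have hle : c (i + n) ≤ 1 := by
        rcases hone i h1 h2 h3 with h | h
        · have := hani i (by omega); rw [h] at this; exact this
        · have := hbni i (by omega); rw [h] at this; exact this
      have hge : (1:ℝ) ≤ c (i + n) := hcge1 (i + n) (by omega) (by omega) (by omega)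
      linarith
    · intro h3
      have hle : c i ≤ 1 := by
        rcases hone' i h1 h2 h3 with h | h
        · have := hai i (by omega); rw [h] at this; exact this
        · have := hbi i (by omega); rw [h] at this; exact this
      have hge : (1:ℝ) ≤ c i := hcge1 i (by omega) (by omega) (by omega)
      linarith
  -- Define the new factors
  obtain ⟨A, hA⟩ : ∃ A : ℕ → ℝ, A = fun i =>
      if i = 0 ∨ i = n then 0
      else if c i = 1 then (if a i = 1 then (1:ℝ) else 3)
      else if c i = 2 ∧ c (i + n) = 2 then 2 else 3 := ⟨_, rfl⟩
  obtain ⟨B, hB⟩ : ∃ B : ℕ → ℝ, B = fun i =>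
      if i = 0 ∨ i = n then 0
      else if c i = 1 then (if b i = 1 then (1:ℝ) else 3)
      else if c i = 2 ∧ c (i + n) = 2 then 2 else 3 := ⟨_, rfl⟩
  have hA0 : A 0 = 0 := by simp [hA]
  have hAn : A n = 0 := by simp [hA]
  have hB0 : B 0 = 0 := by simp [hB]
  have hBn : B n = 0 := by simp [hB]
  have hAint : ∀ u, 0 < u → u < n → A u =
      if c u = 1 then (if a u = 1 then (1:ℝ) else 3)
      else if c u = 2 ∧ c (u + n) = 2 then 2 else 3 := by
    intro u h1 h2
    simp only [hA]
    rw [if_neg (by omega)]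
  have hBint : ∀ u, 0 < u → u < n → B u =
      if c u = 1 then (if b u = 1 then (1:ℝ) else 3)
      else if c u = 2 ∧ c (u + n) = 2 then 2 else 3 := by
    intro u h1 h2
    simp only [hB]
    rw [if_neg (by omega)]
  have hA1 : ∀ u, 0 < u → u < n → A u = 1 → a u = 1 := by
    intro u h1 h2 h
    rw [hAint u h1 h2] at h
    split_ifs at h with g1 g2 g3
    · exact g2
    · norm_num at h
    · norm_num at h
    · norm_num at h
  have hB1 : ∀ u, 0 < u → u < n → B u = 1 → b u = 1 := by
    intro u h1 h2 h
    rw [hBint u h1 h2] at h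
    split_ifs at h with g1 g2 g3
    · exact g2
    · norm_num at h
    · norm_num at h
    · norm_num at h
  have hAge1 : ∀ u, 0 < u → u < n → 1 ≤ A u := by
    intro u h1 h2
    rw [hAint u h1 h2]
    split_ifs <;> norm_num
  have hBge1 : ∀ u, 0 < u → u < n → 1 ≤ B u := by
    intro u h1 h2
    rw [hBint u h1 h2]
    split_ifs <;> norm_num
  have hAne1 : ∀ u, 0 < u → u < n → A u ≠ 1 → 2 ≤ A u := by
    intro u h1 h2 h
    rw [hAint u h1 h2] at h ⊢
    split_ifs at h ⊢ <;> (try norm_num at h) <;> norm_num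
  have hBne1 : ∀ u, 0 < u → u < n → B u ≠ 1 → 2 ≤ B u := by
    intro u h1 h2 h
    rw [hBint u h1 h2] at h ⊢
    split_ifs at h ⊢ <;> (try norm_num at h) <;> norm_num
  have hAge : ∀ u, u ≤ n → c u ≤ A u ∧ c (u + n) ≤ A u := by
    intro u hu
    by_cases h0 : u = 0
    · subst h0
      rw [hA0, hc0, zero_add, hcn]
      norm_num
    by_cases hn' : u = n
    · have h2n' : n + n = 2 * n := by omega
      rw [hn', hAn, hcn, h2n', hc2n]
      norm_num
    rw [hAint u (by omega) (by omega)]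
    by_cases g1 : c u = 1
    · have g1' := (hiff u (by omega) (by omega)).mp g1
      rw [if_pos g1, g1, g1']
      constructor <;> (split_ifs <;> norm_num)
    rw [if_neg g1]
    by_cases g2 : c u = 2 ∧ c (u + n) = 2
    · rw [if_pos g2, g2.1, g2.2]
      norm_num
    · rw [if_neg g2]
      exact ⟨hcle3 u (by omega), hcle3 (u + n) (by omega)⟩
  have hBge : ∀ u, u ≤ n → c u ≤ B u ∧ c (u + n) ≤ B u := by
    intro u hu
    by_cases h0 : u = 0
    · subst h0
      rw [hB0, hc0, zero_add, hcn]
      norm_num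
    by_cases hn' : u = n
    · have h2n' : n + n = 2 * n := by omega
      rw [hn', hBn, hcn, h2n', hc2n]
      norm_num
    rw [hBint u (by omega) (by omega)]
    by_cases g1 : c u = 1
    · have g1' := (hiff u (by omega) (by omega)).mp g1
      rw [if_pos g1, g1, g1']
      constructor <;> (split_ifs <;> norm_num)
    rw [if_neg g1]
    by_cases g2 : c u = 2 ∧ c (u + n) = 2
    · rw [if_pos g2, g2.1, g2.2]
      norm_num
    · rw [if_neg g2]
      exact ⟨hcle3 u (by omega), hcle3 (u + n) (by omega)⟩
  -- Lower bound
  have hlow : ∀ j, j ≤ 2 * n → ∀ u, u ≤ n → u ≤ j → j - u ≤ n → c j ≤ A u + B (j - u) := by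
    intro j hj u h1 h2 h3
    by_cases hu0 : u = 0
    · rw [hu0, hA0, zero_add, Nat.sub_zero]
      exact (hBge j (by omega)).1
    by_cases hun : u = n
    · rw [hun, hAn, zero_add]
      have hj' : (j - n) + n = j := by omega
      have h := (hBge (j - n) (by omega)).2
      rw [hj'] at h
      exact h
    by_cases hv0 : j - u = 0
    · have hju : j = u := by omega
      rw [hv0, hB0, add_zero, hju]
      exact (hAge u (by omega)).1
    by_cases hvn : j - u = n
    · have hju : j = u + n := by omega
      rw [hvn, hBn, add_zero, hju]
      exact (hAge u (by omega)).2
    -- interior: 0 < u < n, 0 < j - u < n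
    by_cases h11 : A u = 1 ∧ B (j - u) = 1
    · have hau := hA1 u (by omega) (by omega) h11.1
      have hbv := hB1 (j - u) (by omega) (by omega) h11.2
      have hle := tropConv_le n n a b j u h1 h2 h3
      rw [hab j hj, hau, hbv] at hle
      rw [h11.1, h11.2]
      linarith
    · have hsum : (3:ℝ) ≤ A u + B (j - u) := by
        rcases not_and_or.mp h11 with h | h
        · have g1 := hAne1 u (by omega) (by omega) h
          have g2 := hBge1 (j - u) (by omega) (by omega)
          linarith
        · have g1 := hAge1 u (by omega) (by omega)
          have g2 := hBne1 (j - u) (by omega) (by omega) h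
          linarith
      have := hcle3 j hj
      linarith
  -- Upper bound: a term achieving c j
  have hup : ∀ j, j ≤ 2 * n → ∃ u, u ≤ n ∧ u ≤ j ∧ j - u ≤ n ∧ A u + B (j - u) ≤ c j := by
    intro j hj
    by_cases hj0 : j = 0
    · refine ⟨0, by omega, by omega, by omega, ?_⟩
      rw [hj0, hc0, Nat.sub_zero, hA0, hB0]
      norm_num
    by_cases hjn : j = n
    · refine ⟨0, by omega, by omega, by omega, ?_⟩
      rw [hjn, hcn, Nat.sub_zero, hA0, hBn]
      norm_num
    by_cases hj2n : j = 2 * n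
    · refine ⟨n, le_rfl, by omega, by omega, ?_⟩
      have hsub : 2 * n - n = n := by omega
      rw [hj2n, hc2n, hsub, hAn, hBn]
      norm_num
    by_cases hjlt : j < n
    · -- 0 < j < n
      rcases hc3 j (by omega) (by omega) hjn with h1 | h2 | h3
      · rcases hone j (by omega) hjlt h1 with g | g
        · refine ⟨j, by omega, le_rfl, by omega, ?_⟩
          rw [Nat.sub_self, hB0, add_zero, hAint j (by omega) hjlt, if_pos h1, if_pos g, h1]
        · refine ⟨0, by omega, by omega, by omega, ?_⟩
          rw [hA0, zero_add, Nat.sub_zero, hBint j (by omega) hjlt, if_pos h1, if_pos g, h1]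
      · rcases hc3 (j + n) (by omega) (by omega) (by omega) with g1 | g2 | g3
        · exfalso
          have := (hiff j (by omega) hjlt).mpr g1
          rw [this] at h2
          norm_num at h2
        · refine ⟨j, by omega, le_rfl, by omega, ?_⟩
          rw [Nat.sub_self, hB0, add_zero, hAint j (by omega) hjlt,
            if_neg (by rw [h2]; norm_num), if_pos ⟨h2, g2⟩, h2]
        · obtain ⟨k, hk1, hk2, hk3, he⟩ :=
            tropConv_attain n n a b j 0 (by omega) (by omega) (by omega)
          rw [hab j hj, h2] at he
          have hk0 : k ≠ 0 := by
            intro h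
            rw [h, ha0, zero_add, Nat.sub_zero] at he
            have hb3 := hbni j (by omega)
            rw [g3] at hb3
            linarith
          have hkj : k ≠ j := by
            intro h
            rw [h, Nat.sub_self, hb0, add_zero] at he
            have ha3 := hani j (by omega)
            rw [g3] at ha3
            linarith
          have hak : (1:ℝ) ≤ a k :=
            le_trans (hcge1 k (by omega) (by omega) (by omega)) (hai k (by omega))
          have hbk : (1:ℝ) ≤ b (j - k) :=
            le_trans (hcge1 (j - k) (by omega) (by omega) (by omega)) (hbi (j - k) (by omega))
          have hak1 : a k = 1 := by linarith
          have hbk1 : b (j - k) = 1 := by linarith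
          have hck : c k = 1 := by
            have h5 := hai k (by omega)
            rw [hak1] at h5
            have h6 := hcge1 k (by omega) (by omega) (by omega)
            linarith
          have hcjk : c (j - k) = 1 := by
            have h5 := hbi (j - k) (by omega)
            rw [hbk1] at h5
            have h6 := hcge1 (j - k) (by omega) (by omega) (by omega)
            linarith
          refine ⟨k, by omega, by omega, by omega, ?_⟩
          rw [hAint k (by omega) (by omega), if_pos hck, if_pos hak1,
            hBint (j - k) (by omega) (by omega), if_pos hcjk, if_pos hbk1, h2]
          norm_num
      · refine ⟨j, by omega, le_rfl, by omega, ?_⟩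
        rw [Nat.sub_self, hB0, add_zero, hAint j (by omega) hjlt,
          if_neg (by rw [h3]; norm_num),
          if_neg (by rintro ⟨x, -⟩; rw [h3] at x; norm_num at x), h3]
    · -- n < j < 2 * n; set m := j - n
      have hmn : 0 < j - n ∧ j - n < n := by omega
      have hm : (j - n) + n = j := by omega
      rcases hc3 j (by omega) (by omega) hjn with h1 | h2 | h3
      · have hm1 : c (j - n) = 1 := by
          apply (hiff (j - n) hmn.1 hmn.2).mpr
          rw [hm]
          exact h1
        rcases hone (j - n) hmn.1 hmn.2 hm1 with g | g
        · refine ⟨j - n, by omega, by omega, by omega, ?_⟩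
          have hsub : j - (j - n) = n := by omega
          rw [hsub, hBn, add_zero, hAint (j - n) hmn.1 hmn.2, if_pos hm1, if_pos g, h1]
        · refine ⟨n, le_rfl, by omega, by omega, ?_⟩
          rw [hAn, zero_add, hBint (j - n) hmn.1 hmn.2, if_pos hm1, if_pos g, h1]
      · rcases hc3 (j - n) (by omega) (by omega) (by omega) with g1 | g2 | g3
        · exfalso
          have := (hiff (j - n) hmn.1 hmn.2).mp g1
          rw [hm, h2] at this
          norm_num at this
        · refine ⟨j - n, by omega, by omega, by omega, ?_⟩
          have hsub : j - (j - n) = n := by omega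
          rw [hsub, hBn, add_zero, hAint (j - n) hmn.1 hmn.2,
            if_neg (by rw [g2]; norm_num), if_pos ⟨g2, by rw [hm]; exact h2⟩, h2]
        · obtain ⟨k, hk1, hk2, hk3, he⟩ :=
            tropConv_attain n n a b j (j - n) (by omega) (by omega) (by omega)
          rw [hab j hj, h2] at he
          have hkm : k ≠ j - n := by
            intro h
            have hsub : j - (j - n) = n := by omega
            rw [h, hsub, hbn, add_zero] at he
            have ha3 := hai (j - n) (by omega)
            rw [g3] at ha3
            linarith
          have hkn : k ≠ n := by
            intro h
            have hsub : j - n = j - n := rfl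
            rw [h, han, zero_add] at he
            have hb3 := hbi (j - n) (by omega)
            rw [g3] at hb3
            linarith
          have hmk : j - n < k := by omega
          have hkltn : k < n := by omega
          have hak : (1:ℝ) ≤ a k :=
            le_trans (hcge1 k (by omega) (by omega) (by omega)) (hai k (by omega))
          have hbk : (1:ℝ) ≤ b (j - k) :=
            le_trans (hcge1 (j - k) (by omega) (by omega) (by omega)) (hbi (j - k) (by omega))
          have hak1 : a k = 1 := by linarith
          have hbk1 : b (j - k) = 1 := by linarith
          have hck : c k = 1 := by
            have h5 := hai k (by omega)
            rw [hak1] at h5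
            have h6 := hcge1 k (by omega) (by omega) (by omega)
            linarith
          have hcjk : c (j - k) = 1 := by
            have h5 := hbi (j - k) (by omega)
            rw [hbk1] at h5
            have h6 := hcge1 (j - k) (by omega) (by omega) (by omega)
            linarith
          refine ⟨k, by omega, by omega, by omega, ?_⟩
          rw [hAint k (by omega) (by omega), if_pos hck, if_pos hak1,
            hBint (j - k) (by omega) (by omega), if_pos hcjk, if_pos hbk1, h2]
          norm_num
      · refine ⟨j - n, by omega, by omega, by omega, ?_⟩
        have hsub : j - (j - n) = n := by omega
        have hne1 : c (j - n) ≠ 1 := by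
          intro g
          have := (hiff (j - n) hmn.1 hmn.2).mp g
          rw [hm, h3] at this
          norm_num at this
        rw [hsub, hBn, add_zero, hAint (j - n) hmn.1 hmn.2, if_neg hne1,
          if_neg (by rintro ⟨-, x⟩; rw [hm, h3] at x; norm_num at x), h3]
  -- the new pair factors c
  have heq : ∀ j ≤ 2 * n, tropConv n n A B j = c j := by
    intro j hj
    obtain ⟨u, h1, h2, h3, h4⟩ := hup j hj
    apply le_antisymm
    · exact le_trans (tropConv_le n n A B j u h1 h2 h3) h4
    · exact le_tropConv n n A B j (c j) u h1 h2 h3 (fun i g1 g2 g3 => hlow j hj i g1 g2 g3)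
  refine ⟨A, B, heq, hA0, hAn, hB0, hBn, ?_⟩
  intro i hi0 hin
  -- the pairs statement when c i = 1
  have pairs : c i = 1 →
      ((A i = 1 ∧ B i = 1) ∨ (A i = 1 ∧ B i = 3) ∨ (A i = 3 ∧ B i = 1)) := by
    intro h1
    have hA' : A i = if a i = 1 then (1:ℝ) else 3 := by
      rw [hAint i hi0 hin, if_pos h1]
    have hB' : B i = if b i = 1 then (1:ℝ) else 3 := by
      rw [hBint i hi0 hin, if_pos h1]
    by_cases ga : a i = 1 <;> by_cases gb : b i = 1
    · left; rw [hA', hB', if_pos ga, if_pos gb]; exact ⟨rfl, rfl⟩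
    · right; left; rw [hA', hB', if_pos ga, if_neg gb]; exact ⟨rfl, rfl⟩
    · right; right; rw [hA', hB', if_neg ga, if_pos gb]; exact ⟨rfl, rfl⟩
    · exfalso; rcases hone i hi0 hin h1 with g | g
      · exact ga g
      · exact gb g
  refine ⟨?_, ?_, ?_, ?_⟩
  · intro h1
    exact ⟨pairs h1, (hiff i hi0 hin).mp h1⟩
  · intro h1
    have h2 := (hiff i hi0 hin).mpr h1
    exact ⟨h2, pairs h2⟩
  · intro h1 h2
    constructor
    · rw [hAint i hi0 hin, if_neg (by rw [h1]; norm_num), if_pos ⟨h1, h2⟩]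
    · rw [hBint i hi0 hin, if_neg (by rw [h1]; norm_num), if_pos ⟨h1, h2⟩]
  · intro h3
    have hne1 : c i ≠ 1 := by
      rcases h3 with h | h
      · intro g; rw [g] at h; norm_num at h
      · intro g
        have := (hiff i hi0 hin).mp g
        rw [this] at h
        norm_num at h
    have hne2 : ¬(c i = 2 ∧ c (i + n) = 2) := by
      rintro ⟨x, y⟩
      rcases h3 with h | h
      · rw [h] at x; norm_num at x
      · rw [h] at y; norm_num at y
    constructor
    · rw [hAint i hi0 hin, if_neg hne1, if_neg hne2]
    · rw [hBint i hi0 hin, if_neg hne1, if_neg hne2]
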